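/- Let 0 ≤ B < A ≤ 1, c ≥ 0, and K ≥ c(1+A)(1+B)/(4(A-B)) - (1-B)/(1+B). Set β = (1-B)/(1+B), so 0 < β ≤ 1. Then for every t ≥ β², t·(-(K/2) - β/2 + c(1+A)(1+B)/(8(A-B))) - (K/2)(1-β²) - β(1-β²)²/(2t) - β(1-β²) ≤ 0. -/
import Mathlib


theorem stmt_7 (A B c K : ℝ) (hB : 0 ≤ B) (hBA : B < A) (hA : A ≤ 1) (hc : 0 ≤ c)
    (hK : K ≥ c * (1 + A) * (1 + B) / (4 * (A - B)) - (1 - B) / (1 + B))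
    (β : ℝ) (hβ : β = (1 - B) / (1 + B)) :
    ∀ t : ℝ, t ≥ β ^ 2 →
      t * (-(K / 2) - β / 2 + c * (1 + A) * (1 + B) / (8 * (A - B))) -
          (K / 2) * (1 - β ^ 2) - β * (1 - β ^ 2) ^ 2 / (2 * t) - β * (1 - β ^ 2) ≤ 0 := by
  intro t ht
  have hB1 : (0:ℝ) < 1 + B := by linarith
  have hAB : (0:ℝ) < A - B := by linarith
  have hB2 : (0:ℝ) < 1 - B := by linarith
  have hβ0 : 0 < β := by rw [hβ]; positivity
  have hβ1 : β ≤ 1 := by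
    rw [hβ, div_le_one hB1]; linarith
  have ht0 : 0 < t := lt_of_lt_of_le (by positivity) ht
  have hD : 0 ≤ c * (1 + A) * (1 + B) / (4 * (A - B)) := div_nonneg (mul_nonneg (mul_nonneg hc (by linarith)) (by linarith)) (by linarith)
  have hdiv : 0 ≤ β * (1 - β ^ 2) ^ 2 / (2 * t) := by
    exact div_nonneg (mul_nonneg hβ0.le (sq_nonneg _)) (by linarith)
  have hKβ : 0 ≤ K + β - c * (1 + A) * (1 + B) / (4 * (A - B)) := by
    rw [hβ] at *; linarith
  have h8 : c * (1 + A) * (1 + B) / (8 * (A - B))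
      = (c * (1 + A) * (1 + B) / (4 * (A - B))) / 2 := by
    rw [show (8:ℝ) * (A - B) = 4 * (A - B) * 2 by ring, ← div_div]
  rw [h8]
  have h1 : (0:ℝ) ≤ 1 - β ^ 2 := by nlinarith
  have hKβ0 : 0 ≤ K + β := by linarith
  nlinarith [mul_nonneg ht0.le hKβ, mul_nonneg h1 hKβ0, mul_nonneg hβ0.le h1, hdiv]
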